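/- Let R ∈ ℂ[x] be a univariate polynomial of degree D with exactly k roots (counted with multiplicity) of absolute value at most r/(16D) and the remaining D − k roots of absolute value at least 16 D^4 r, for some r > 0 and 0 ≤ k ≤ D. Then the Pellet dominance condition holds at radius r: writing R(x) = Σ_i c_i x^i, |c_k| r^k > (3/2) Σ_{i≠k} |c_i| r^i. -/

import Mathlib

open Polynomial Finset
set_option maxHeartbeats 1000000

lemma norm_multiset_prod_eq (s : Multiset ℂ) : ‖s.prod‖ = (s.map (fun z => ‖z‖)).prod := by
  induction s using Multiset.induction_on with
  | empty => simp
  | cons a s ih => simp [norm_mul, ih]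

lemma norm_prod_le_pow (T : Multiset ℂ) (a : ℝ) (ha : 0 ≤ a) (h : ∀ z ∈ T, ‖z‖ ≤ a) :
    ‖T.prod‖ ≤ a ^ Multiset.card T := by
  induction T using Multiset.induction_on with
  | empty => simp
  | cons x T ih =>
    simp only [Multiset.prod_cons, Multiset.card_cons, norm_mul, pow_succ']
    exact mul_le_mul (h x (Multiset.mem_cons_self x T))
      (ih fun z hz => h z (Multiset.mem_cons_of_mem hz)) (norm_nonneg _) ha

lemma pow_le_norm_prod (T : Multiset ℂ) (b : ℝ) (hb : 0 ≤ b) (h : ∀ z ∈ T, b ≤ ‖z‖) :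
    b ^ Multiset.card T ≤ ‖T.prod‖ := by
  induction T using Multiset.induction_on with
  | empty => simp
  | cons x T ih =>
    simp only [Multiset.prod_cons, Multiset.card_cons, norm_mul, pow_succ']
    exact mul_le_mul (h x (Multiset.mem_cons_self x T))
      (ih fun z hz => h z (Multiset.mem_cons_of_mem hz)) (pow_nonneg hb _)
      (norm_nonneg x)

-- upper bound on esymm for small elements
lemma esymm_norm_le (s : Multiset ℂ) (a : ℝ) (ha : 0 ≤ a) (hs : ∀ z ∈ s, ‖z‖ ≤ a) (n : ℕ) :
    ‖s.esymm n‖ ≤ (Multiset.card s).choose n * a ^ n := by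
  rw [Multiset.esymm]
  refine (norm_multiset_sum_le _).trans ?_
  rw [Multiset.map_map]
  have h1 : ∀ x ∈ (s.powersetCard n).map (fun T => ‖T.prod‖), x ≤ a ^ n := by
    intro x hx
    obtain ⟨T, hT, rfl⟩ := Multiset.mem_map.mp hx
    obtain ⟨hTs, hTc⟩ := (Multiset.mem_powersetCard).mp hT
    rw [← hTc]
    exact norm_prod_le_pow T a ha fun z hz => hs z (Multiset.mem_of_le hTs hz)
  calc (Multiset.map (fun T => ‖Multiset.prod T‖) (s.powersetCard n)).sum
      ≤ Multiset.card ((s.powersetCard n).map (fun T => ‖T.prod‖)) • (a ^ n) :=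
        Multiset.sum_le_card_nsmul _ _ h1
    _ = (Multiset.card s).choose n * a ^ n := by
        rw [Multiset.card_map, Multiset.card_powersetCard, nsmul_eq_mul]

-- upper bound on esymm for large elements, relative to the full product
lemma esymm_norm_le_large (t : Multiset ℂ) (b : ℝ) (hb : 0 < b) (ht : ∀ z ∈ t, b ≤ ‖z‖)
    (n : ℕ) (hn : n ≤ Multiset.card t) :
    ‖t.esymm n‖ ≤ (Multiset.card t).choose n * (‖t.prod‖ / b ^ (Multiset.card t - n)) := by
  rw [Multiset.esymm]
  refine (norm_multiset_sum_le _).trans ?_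
  rw [Multiset.map_map]
  have h1 : ∀ x ∈ (t.powersetCard n).map (fun T => ‖T.prod‖),
      x ≤ ‖t.prod‖ / b ^ (Multiset.card t - n) := by
    intro x hx
    obtain ⟨T, hT, rfl⟩ := Multiset.mem_map.mp hx
    obtain ⟨hTs, hTc⟩ := (Multiset.mem_powersetCard).mp hT
    rw [le_div_iff₀ (pow_pos hb _)]
    have hsplit : T + (t - T) = t := add_tsub_cancel_of_le hTs
    have hprod : ‖t.prod‖ = ‖T.prod‖ * ‖(t - T).prod‖ := by
      rw [← norm_mul, ← Multiset.prod_add, hsplit]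
    have hcard : Multiset.card (t - T) = Multiset.card t - n := by
      rw [Multiset.card_sub hTs, hTc]
    rw [hprod, ← hcard]
    refine mul_le_mul_of_nonneg_left ?_ (norm_nonneg _)
    exact pow_le_norm_prod _ b hb.le fun z hz =>
      ht z (Multiset.mem_of_le (Multiset.sub_le_self t T) hz)
  calc (Multiset.map (fun T => ‖Multiset.prod T‖) (t.powersetCard n)).sum
      ≤ Multiset.card ((t.powersetCard n).map (fun T => ‖T.prod‖)) •
          (‖t.prod‖ / b ^ (Multiset.card t - n)) := Multiset.sum_le_card_nsmul _ _ h1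
    _ = _ := by rw [Multiset.card_map, Multiset.card_powersetCard, nsmul_eq_mul]

lemma geo_le (x : ℝ) (h0 : 0 ≤ x) (h1 : x < 1) (n : ℕ) :
    ∑ j ∈ Finset.range n, x ^ j ≤ 1 / (1 - x) := by
  rw [geom_sum_eq (by linarith) n, div_le_iff_of_neg (by linarith : x - 1 < 0),
    div_mul_eq_mul_div, div_le_iff₀ (by linarith : (0:ℝ) < 1 - x)]
  nlinarith [pow_nonneg h0 n]

theorem tk_test_completeness (R : Polynomial ℂ) (hR : R ≠ 0) (D k : ℕ)
    (hdeg : R.natDegree = D) (hk : k ≤ D) (r : ℝ) (hr : 0 < r)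
    (hsmall : (R.roots.filter (fun z => ‖z‖ ≤ r / (16 * D))).card = k)
    (hsplit : ∀ z ∈ R.roots, ‖z‖ ≤ r / (16 * D) ∨ 16 * (D : ℝ) ^ 4 * r ≤ ‖z‖) :
    ‖R.coeff k‖ * r ^ k >
      (3 / 2) * ∑ i ∈ (Finset.range (D + 1)).erase k, ‖R.coeff i‖ * r ^ i := by
  rcases Nat.eq_zero_or_pos D with hD0 | hD
  · subst hD0
    have hk0 : k = 0 := Nat.le_zero.mp hk
    subst hk0
    have he : (Finset.range (0 + 1)).erase 0 = (∅ : Finset ℕ) := rfl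
    rw [he, Finset.sum_empty, mul_zero, pow_zero, mul_one]
    have hc : R.coeff 0 ≠ 0 := by
      intro h
      have h2 := Polynomial.eq_C_of_natDegree_eq_zero hdeg
      rw [h, map_zero] at h2; exact hR h2
    exact norm_pos_iff.mpr hc
  -- main case
  have hD1 : (1:ℝ) ≤ D := by exact_mod_cast hD
  have hDpos : (0:ℝ) < D := by linarith
  set a : ℝ := r / (16 * D) with ha_def
  set b : ℝ := 16 * (D:ℝ) ^ 4 * r with hb_def
  have ha : 0 < a := div_pos hr (by positivity)
  have hb : 0 < b := by positivity
  set s : Multiset ℂ := R.roots.filter (fun z => ‖z‖ ≤ a) with hs_def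
  set t : Multiset ℂ := R.roots.filter (fun z => ¬ ‖z‖ ≤ a) with ht_def
  have hst : s + t = R.roots := Multiset.filter_add_not _ _
  have hsplits : R.Splits := IsAlgClosed.splits R
  have hcard : Multiset.card R.roots = D := by
    rw [← hdeg]; exact Polynomial.splits_iff_card_roots.mp hsplits
  have hks : Multiset.card s = k := hsmall
  have hkt : Multiset.card t = D - k := by
    have := congrArg Multiset.card hst
    rw [Multiset.card_add, hks, hcard] at this
    omega
  have htlarge : ∀ z ∈ t, b ≤ ‖z‖ := by
    intro z hz
    obtain ⟨hzr, hzn⟩ := Multiset.mem_filter.mp hz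
    rcases hsplit z hzr with h | h
    · exact absurd h hzn
    · exact h
  have hssmall : ∀ z ∈ s, ‖z‖ ≤ a := fun z hz => (Multiset.mem_filter.mp hz).2
  set A : Polynomial ℂ := (s.map fun z => X - C z).prod with hA_def
  set B : Polynomial ℂ := (t.map fun z => X - C z).prod with hB_def
  have hAdeg : A.natDegree = k := by
    rw [hA_def, natDegree_multiset_prod_X_sub_C_eq_card, hks]
  have hBdeg : B.natDegree = D - k := by
    rw [hB_def, natDegree_multiset_prod_X_sub_C_eq_card, hkt]
  have hfact : R = C R.leadingCoeff * (A * B) := by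
    conv_lhs => rw [← C_leadingCoeff_mul_prod_multiset_X_sub_C (Polynomial.splits_iff_card_roots.mp hsplits)]
    rw [← hst, Multiset.map_add, Multiset.prod_add]
  have hcoeff : ∀ i, R.coeff i =
      R.leadingCoeff * ∑ x ∈ Finset.HasAntidiagonal.antidiagonal i, A.coeff x.1 * B.coeff x.2 := by
    intro i
    conv_lhs => rw [hfact]
    rw [coeff_C_mul, coeff_mul]
  set Pn : ℝ := ‖t.prod‖ with hPn_def
  have hPpos : 0 < Pn := by
    have := pow_le_norm_prod t b hb.le htlarge
    have hbp : 0 < b ^ Multiset.card t := pow_pos hb _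
    exact lt_of_lt_of_le hbp this
  have hlc : 0 < ‖R.leadingCoeff‖ := norm_pos_iff.mpr (leadingCoeff_ne_zero.mpr hR)
  have hDa : (D:ℝ) * a = r / 16 := by
    rw [ha_def]; field_simp
  have hA_le : ∀ p, p ≤ k → ‖A.coeff p‖ ≤ (r / 16) ^ (k - p) := by
    intro p hp
    have hc := Multiset.prod_X_sub_C_coeff s (show p ≤ Multiset.card s by rw [hks]; exact hp)
    rw [hA_def, hc, norm_mul, norm_pow, norm_neg, norm_one, one_pow, one_mul, hks]
    calc ‖s.esymm (k - p)‖ ≤ (Multiset.card s).choose (k - p) * a ^ (k - p) :=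
          esymm_norm_le s a ha.le hssmall (k - p)
      _ ≤ (D:ℝ) ^ (k - p) * a ^ (k - p) := by
          refine mul_le_mul_of_nonneg_right ?_ (pow_nonneg ha.le _)
          rw [hks]
          calc ((k.choose (k - p) : ℕ) : ℝ) ≤ ((k ^ (k - p) : ℕ) : ℝ) := by
                exact_mod_cast Nat.choose_le_pow k (k - p)
            _ ≤ (D:ℝ) ^ (k - p) := by
                rw [Nat.cast_pow]
                exact pow_le_pow_left₀ (by positivity) (by exact_mod_cast hk) _
      _ = (r / 16) ^ (k - p) := by rw [← mul_pow, hDa]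
  have hDb : (D:ℝ) / b ≤ 1 / (16 * r) := by
    rw [hb_def, div_le_div_iff₀ (by positivity) (by positivity)]
    nlinarith [sq_nonneg ((D:ℝ) - 1), sq_nonneg ((D:ℝ)^2 - 1), pow_le_pow_left₀ (by norm_num : (0:ℝ) ≤ 1) hD1 4]
  have hB_le : ∀ q, q ≤ D - k → ‖B.coeff q‖ ≤ Pn * (1 / (16 * r)) ^ q := by
    intro q hq
    have hc := Multiset.prod_X_sub_C_coeff t (show q ≤ Multiset.card t by rw [hkt]; exact hq)
    rw [hB_def, hc, norm_mul, norm_pow, norm_neg, norm_one, one_pow, one_mul]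
    have h1 := esymm_norm_le_large t b hb htlarge (Multiset.card t - q)
      (Nat.sub_le _ _)
    have h2 : Multiset.card t - (Multiset.card t - q) = q :=
      Nat.sub_sub_self (by rw [hkt]; exact hq)
    rw [h2] at h1
    refine h1.trans ?_
    have h3 : ((Multiset.card t).choose (Multiset.card t - q) : ℝ) ≤ (D:ℝ) ^ q := by
      rw [Nat.choose_symm (by rw [hkt]; exact hq)]
      calc (((Multiset.card t).choose q : ℕ) : ℝ) ≤ (((Multiset.card t) ^ q : ℕ) : ℝ) := by
            exact_mod_cast Nat.choose_le_pow _ q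
        _ ≤ (D:ℝ) ^ q := by
            rw [Nat.cast_pow]
            refine pow_le_pow_left₀ (by positivity) ?_ _
            rw [hkt]
            exact_mod_cast Nat.sub_le D k
    calc ((Multiset.card t).choose (Multiset.card t - q) : ℝ) * (‖t.prod‖ / b ^ q)
        ≤ (D:ℝ) ^ q * (Pn / b ^ q) := by
          exact mul_le_mul_of_nonneg_right h3 (by positivity)
      _ = Pn * ((D:ℝ) / b) ^ q := by
          rw [div_pow]; ring
      _ ≤ Pn * (1 / (16 * r)) ^ q := by
          refine mul_le_mul_of_nonneg_left ?_ hPpos.le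
          exact pow_le_pow_left₀ (by positivity) hDb _
  have key : ∀ p q : ℕ, p ≤ k → q ≤ D - k →
      ‖A.coeff p‖ * ‖B.coeff q‖ * r ^ (p + q) ≤
        Pn * r ^ k * ((1/16 : ℝ) ^ (k - p) * (1/16) ^ q) := by
    intro p q hp hq
    have h1 : ‖A.coeff p‖ * ‖B.coeff q‖ * r ^ (p + q) ≤
        (r / 16) ^ (k - p) * (Pn * (1 / (16 * r)) ^ q) * (r ^ p * r ^ q) := by
      rw [pow_add]
      exact mul_le_mul (mul_le_mul (hA_le p hp) (hB_le q hq) (norm_nonneg _)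
        (by positivity)) le_rfl (by positivity) (by positivity)
    refine h1.trans_eq ?_
    have h2 : (r / 16 : ℝ) = r * (1/16) := by ring
    have h3 : r ^ (k - p) * r ^ p = r ^ k := by
      rw [← pow_add, Nat.sub_add_cancel hp]
    have h4 : ((1 : ℝ) / (16 * r)) ^ q * r ^ q = (1/16) ^ q := by
      rw [← mul_pow]
      congr 1
      field_simp
    calc (r / 16) ^ (k - p) * (Pn * (1 / (16 * r)) ^ q) * (r ^ p * r ^ q)
        = (r ^ (k - p) * r ^ p) * ((1 / (16 * r)) ^ q * r ^ q) *
            ((1/16) ^ (k - p) * Pn) := by rw [h2, mul_pow]; ring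
      _ = Pn * r ^ k * ((1/16 : ℝ) ^ (k - p) * (1/16) ^ q) := by
          rw [h3, h4]; ring
  set g : ℕ × ℕ → ℝ := fun x => (1/16 : ℝ) ^ (k - x.1) * (1/16) ^ x.2 with hg_def
  set h : ℕ × ℕ → ℝ := fun x => if x.1 ≤ k ∧ x.2 ≤ D - k then g x else 0 with hh_def
  have hg_nonneg : ∀ x, 0 ≤ g x := fun x => by positivity
  have hcoeff_le : ∀ i, ‖R.coeff i‖ * r ^ i ≤
      ‖R.leadingCoeff‖ * Pn * r ^ k * ∑ x ∈ Finset.HasAntidiagonal.antidiagonal i, h x := by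
    intro i
    rw [hcoeff i, norm_mul]
    have step1 : ‖∑ x ∈ Finset.HasAntidiagonal.antidiagonal i, A.coeff x.1 * B.coeff x.2‖ * r ^ i ≤
        ∑ x ∈ Finset.HasAntidiagonal.antidiagonal i, ‖A.coeff x.1‖ * ‖B.coeff x.2‖ * r ^ (x.1 + x.2) := by
      calc ‖∑ x ∈ Finset.HasAntidiagonal.antidiagonal i, A.coeff x.1 * B.coeff x.2‖ * r ^ i
          ≤ (∑ x ∈ Finset.HasAntidiagonal.antidiagonal i, ‖A.coeff x.1 * B.coeff x.2‖) * r ^ i :=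
            mul_le_mul_of_nonneg_right (norm_sum_le _ _) (by positivity)
        _ = ∑ x ∈ Finset.HasAntidiagonal.antidiagonal i, ‖A.coeff x.1‖ * ‖B.coeff x.2‖ * r ^ (x.1 + x.2) := by
            rw [Finset.sum_mul]
            refine Finset.sum_congr rfl fun x hx => ?_
            have hxi : x.1 + x.2 = i := Finset.HasAntidiagonal.mem_antidiagonal.mp hx
            rw [norm_mul, hxi]
    have step2 : ∑ x ∈ Finset.HasAntidiagonal.antidiagonal i, ‖A.coeff x.1‖ * ‖B.coeff x.2‖ * r ^ (x.1 + x.2) ≤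
        ∑ x ∈ Finset.HasAntidiagonal.antidiagonal i, Pn * r ^ k * h x := by
      refine Finset.sum_le_sum fun x hx => ?_
      by_cases hx1 : x.1 ≤ k ∧ x.2 ≤ D - k
      · have : h x = g x := by rw [hh_def]; simp only [hx1.1, hx1.2, if_true, and_self]
        rw [this]
        exact key x.1 x.2 hx1.1 hx1.2
      · rcases not_and_or.mp hx1 with hc | hc
        · rw [coeff_eq_zero_of_natDegree_lt (show A.natDegree < x.1 by rw [hAdeg]; omega)]
          simp [hh_def, hx1]
        · rw [coeff_eq_zero_of_natDegree_lt (show B.natDegree < x.2 by rw [hBdeg]; omega)]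
          simp [hh_def, hx1]
    calc ‖R.leadingCoeff‖ * ‖∑ x ∈ Finset.HasAntidiagonal.antidiagonal i, A.coeff x.1 * B.coeff x.2‖ * r ^ i
        = ‖R.leadingCoeff‖ *
            (‖∑ x ∈ Finset.HasAntidiagonal.antidiagonal i, A.coeff x.1 * B.coeff x.2‖ * r ^ i) := by ring
      _ ≤ ‖R.leadingCoeff‖ * ∑ x ∈ Finset.HasAntidiagonal.antidiagonal i, Pn * r ^ k * h x :=
          mul_le_mul_of_nonneg_left (step1.trans step2) (norm_nonneg _)
      _ = ‖R.leadingCoeff‖ * Pn * r ^ k * ∑ x ∈ Finset.HasAntidiagonal.antidiagonal i, h x := by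
          rw [← Finset.mul_sum]; ring
  have hsum : ∑ i ∈ (Finset.range (D + 1)).erase k,
      ∑ x ∈ Finset.HasAntidiagonal.antidiagonal i, h x ≤ 31 / 225 := by
    set T := (Finset.range (D + 1)).erase k with hT_def
    have hdisj : (T : Set ℕ).PairwiseDisjoint Finset.HasAntidiagonal.antidiagonal := by
      intro i _ j _ hij
      refine Finset.disjoint_left.mpr fun x hxi hxj => hij ?_
      rw [← Finset.HasAntidiagonal.mem_antidiagonal.mp hxi, ← Finset.HasAntidiagonal.mem_antidiagonal.mp hxj]
    rw [← Finset.sum_biUnion hdisj]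
    set box := Finset.range (k + 1) ×ˢ Finset.range (D - k + 1) with hbox_def
    have hUsub : (T.biUnion Finset.HasAntidiagonal.antidiagonal).filter (fun x => x.1 ≤ k ∧ x.2 ≤ D - k)
        ⊆ box.erase (k, 0) := by
      intro x hx
      obtain ⟨hxU, hxp⟩ := Finset.mem_filter.mp hx
      obtain ⟨i, hiT, hxi⟩ := Finset.mem_biUnion.mp hxU
      have h1 : x.1 + x.2 = i := Finset.HasAntidiagonal.mem_antidiagonal.mp hxi
      have h2 : i ≠ k := (Finset.mem_erase.mp hiT).1
      refine Finset.mem_erase.mpr ⟨?_, ?_⟩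
      · intro hxe
        rw [hxe] at h1
        simp at h1
        omega
      · exact Finset.mem_product.mpr
          ⟨Finset.mem_range.mpr (by omega), Finset.mem_range.mpr (by omega)⟩
    have h1 : ∑ x ∈ T.biUnion Finset.HasAntidiagonal.antidiagonal, h x
        = ∑ x ∈ (T.biUnion Finset.HasAntidiagonal.antidiagonal).filter
            (fun x => x.1 ≤ k ∧ x.2 ≤ D - k), g x := by
      rw [Finset.sum_filter]
    have h2 : ∑ x ∈ (T.biUnion Finset.HasAntidiagonal.antidiagonal).filter
          (fun x => x.1 ≤ k ∧ x.2 ≤ D - k), g x ≤ ∑ x ∈ box.erase (k, 0), g x :=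
      Finset.sum_le_sum_of_subset_of_nonneg hUsub (fun x _ _ => hg_nonneg x)
    rw [h1]
    refine h2.trans ?_
    have hk0box : ((k, 0) : ℕ × ℕ) ∈ box := Finset.mem_product.mpr
      ⟨Finset.mem_range.mpr (by omega), Finset.mem_range.mpr (by omega)⟩
    have h3 : g (k, 0) + ∑ x ∈ box.erase (k, 0), g x = ∑ x ∈ box, g x :=
      Finset.add_sum_erase box g hk0box
    have hgk0 : g (k, 0) = 1 := by simp [hg_def]
    have h4 : ∑ x ∈ box, g x =
        (∑ p ∈ Finset.range (k + 1), (1/16:ℝ) ^ (k - p)) *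
          (∑ q ∈ Finset.range (D - k + 1), (1/16:ℝ) ^ q) := by
      rw [Finset.sum_mul_sum, hbox_def, Finset.sum_product]
    have h5 : ∑ p ∈ Finset.range (k + 1), (1/16:ℝ) ^ (k - p)
        = ∑ j ∈ Finset.range (k + 1), (1/16:ℝ) ^ j := by
      have := Finset.sum_range_reflect (fun j => ((1:ℝ)/16) ^ j) (k + 1)
      simpa using this
    have hgeo1 : ∑ j ∈ Finset.range (k + 1), ((1:ℝ)/16) ^ j ≤ 16/15 := by
      calc ∑ j ∈ Finset.range (k + 1), ((1:ℝ)/16) ^ j ≤ 1 / (1 - 1/16) :=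
            geo_le (1/16) (by norm_num) (by norm_num) (k + 1)
        _ = 16/15 := by norm_num
    have hgeo2 : ∑ q ∈ Finset.range (D - k + 1), ((1:ℝ)/16) ^ q ≤ 16/15 := by
      calc ∑ q ∈ Finset.range (D - k + 1), ((1:ℝ)/16) ^ q ≤ 1 / (1 - 1/16) :=
            geo_le (1/16) (by norm_num) (by norm_num) (D - k + 1)
        _ = 16/15 := by norm_num
    have hpos1 : (0:ℝ) ≤ ∑ p ∈ Finset.range (k + 1), (1/16:ℝ) ^ (k - p) :=
      Finset.sum_nonneg fun _ _ => by positivity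
    have hpos2 : (0:ℝ) ≤ ∑ q ∈ Finset.range (D - k + 1), (1/16:ℝ) ^ q :=
      Finset.sum_nonneg fun _ _ => by positivity
    have hbox_le : ∑ x ∈ box, g x ≤ 256/225 := by
      rw [h4]
      calc (∑ p ∈ Finset.range (k + 1), (1/16:ℝ) ^ (k - p)) *
            (∑ q ∈ Finset.range (D - k + 1), (1/16:ℝ) ^ q)
          ≤ (16/15) * (16/15) := by
            refine mul_le_mul ?_ hgeo2 hpos2 (by norm_num)
            rw [h5]; exact hgeo1
        _ = 256/225 := by norm_num
    linarith
  have hlow : ‖R.leadingCoeff‖ * Pn * (254 / 255) ≤ ‖R.coeff k‖ := by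
    have hAk : A.coeff k = 1 := by
      have hm : A.Monic := monic_multiset_prod_of_monic _ _ fun z _ => monic_X_sub_C z
      rw [← hAdeg]; exact hm.coeff_natDegree
    have hB0 : ‖B.coeff 0‖ = Pn := by
      rw [hB_def, coeff_zero_eq_eval_zero, eval_multiset_prod, Multiset.map_map]
      simp only [Function.comp, eval_sub, eval_X, eval_C, zero_sub]
      rw [norm_multiset_prod_eq, hPn_def, norm_multiset_prod_eq, Multiset.map_map]
      simp [Function.comp]
    have hsplitk : R.coeff k = R.leadingCoeff *
        (∑ p ∈ Finset.range k, A.coeff p * B.coeff (k - p) + B.coeff 0) := by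
      rw [hcoeff k, Finset.Nat.sum_antidiagonal_eq_sum_range_succ_mk, Finset.sum_range_succ]
      simp [hAk]
    have hterm : ∀ p ∈ Finset.range k,
        ‖A.coeff p * B.coeff (k - p)‖ ≤ Pn * (1/256 : ℝ) ^ (k - p) := by
      intro p hp
      have hpk : p < k := Finset.mem_range.mp hp
      by_cases hq : k - p ≤ D - k
      · have hkey := key p (k - p) hpk.le hq
        have hpq : p + (k - p) = k := by omega
        rw [hpq] at hkey
        have h256 : ((1:ℝ)/16) ^ (k - p) * (1/16) ^ (k - p) = (1/256 : ℝ) ^ (k - p) := by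
          rw [← mul_pow]; norm_num
        rw [norm_mul]
        calc ‖A.coeff p‖ * ‖B.coeff (k - p)‖
            ≤ Pn * ((1/16:ℝ) ^ (k - p) * (1/16) ^ (k - p)) := by
              have h2 : (‖A.coeff p‖ * ‖B.coeff (k - p)‖) * r ^ k ≤
                  (Pn * ((1/16:ℝ) ^ (k - p) * (1/16) ^ (k - p))) * r ^ k := by
                calc (‖A.coeff p‖ * ‖B.coeff (k - p)‖) * r ^ k
                    = ‖A.coeff p‖ * ‖B.coeff (k - p)‖ * r ^ k := by ring
                  _ ≤ Pn * r ^ k * ((1/16:ℝ) ^ (k - p) * (1/16) ^ (k - p)) := hkey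
                  _ = (Pn * ((1/16:ℝ) ^ (k - p) * (1/16) ^ (k - p))) * r ^ k := by ring
              exact le_of_mul_le_mul_right h2 (pow_pos hr k)
          _ = Pn * (1/256 : ℝ) ^ (k - p) := by rw [h256]
      · rw [coeff_eq_zero_of_natDegree_lt (show B.natDegree < k - p by rw [hBdeg]; omega)]
        simp
        positivity
    have htail : ‖∑ p ∈ Finset.range k, A.coeff p * B.coeff (k - p)‖ ≤ Pn * (1/255) := by
      refine (norm_sum_le _ _).trans ?_
      calc ∑ p ∈ Finset.range k, ‖A.coeff p * B.coeff (k - p)‖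
          ≤ ∑ p ∈ Finset.range k, Pn * (1/256 : ℝ) ^ (k - p) :=
            Finset.sum_le_sum hterm
        _ = Pn * ∑ p ∈ Finset.range k, (1/256 : ℝ) ^ (k - p) := by
            rw [Finset.mul_sum]
        _ ≤ Pn * (1/255) := by
            refine mul_le_mul_of_nonneg_left ?_ hPpos.le
            have hrefl : ∑ p ∈ Finset.range k, (1/256 : ℝ) ^ (k - p)
                = ∑ j ∈ Finset.range k, (1/256 : ℝ) ^ (j + 1) := by
              have := Finset.sum_range_reflect (fun j => ((1:ℝ)/256) ^ (j + 1)) k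
              rw [← this]
              refine Finset.sum_congr rfl fun p hp => ?_
              have := Finset.mem_range.mp hp
              congr 1
              omega
            rw [hrefl]
            have : ∑ j ∈ Finset.range k, (1/256 : ℝ) ^ (j + 1)
                = (1/256) * ∑ j ∈ Finset.range k, (1/256 : ℝ) ^ j := by
              rw [Finset.mul_sum]
              exact Finset.sum_congr rfl fun j _ => by ring
            rw [this]
            have hg := geo_le (1/256) (by norm_num) (by norm_num) k
            nlinarith [hg]
    have habs : Pn - Pn * (1/255) ≤
        ‖∑ p ∈ Finset.range k, A.coeff p * B.coeff (k - p) + B.coeff 0‖ := by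
      have h1 : ‖B.coeff 0‖ ≤
          ‖∑ p ∈ Finset.range k, A.coeff p * B.coeff (k - p) + B.coeff 0‖ +
            ‖∑ p ∈ Finset.range k, A.coeff p * B.coeff (k - p)‖ := by
        calc ‖B.coeff 0‖
            = ‖(∑ p ∈ Finset.range k, A.coeff p * B.coeff (k - p) + B.coeff 0) -
                ∑ p ∈ Finset.range k, A.coeff p * B.coeff (k - p)‖ := by
              congr 1; ring
          _ ≤ _ := norm_sub_le _ _
      rw [hB0] at h1
      linarith
    rw [hsplitk, norm_mul]
    calc ‖R.leadingCoeff‖ * Pn * (254/255)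
        = ‖R.leadingCoeff‖ * (Pn - Pn * (1/255)) := by ring
      _ ≤ ‖R.leadingCoeff‖ *
          ‖∑ p ∈ Finset.range k, A.coeff p * B.coeff (k - p) + B.coeff 0‖ :=
          mul_le_mul_of_nonneg_left habs (norm_nonneg _)
  have hLpos : 0 < ‖R.leadingCoeff‖ * Pn * r ^ k := by positivity
  calc (3 / 2) * ∑ i ∈ (Finset.range (D + 1)).erase k, ‖R.coeff i‖ * r ^ i
      ≤ (3 / 2) * ∑ i ∈ (Finset.range (D + 1)).erase k,
          (‖R.leadingCoeff‖ * Pn * r ^ k * ∑ x ∈ Finset.HasAntidiagonal.antidiagonal i, h x) := by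
        exact mul_le_mul_of_nonneg_left
          (Finset.sum_le_sum fun i _ => hcoeff_le i) (by norm_num)
    _ = ‖R.leadingCoeff‖ * Pn * r ^ k *
          ((3 / 2) * ∑ i ∈ (Finset.range (D + 1)).erase k,
            ∑ x ∈ Finset.HasAntidiagonal.antidiagonal i, h x) := by
        rw [← Finset.mul_sum]; ring
    _ ≤ ‖R.leadingCoeff‖ * Pn * r ^ k * ((3 / 2) * (31 / 225)) := by
        refine mul_le_mul_of_nonneg_left ?_ (by positivity)
        exact mul_le_mul_of_nonneg_left hsum (by norm_num)
    _ < ‖R.leadingCoeff‖ * Pn * r ^ k * (254 / 255) := by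
        have : (3/2 : ℝ) * (31/225) < 254/255 := by norm_num
        exact mul_lt_mul_of_pos_left this hLpos
    _ = (‖R.leadingCoeff‖ * Pn * (254 / 255)) * r ^ k := by ring
    _ ≤ ‖R.coeff k‖ * r ^ k :=
        mul_le_mul_of_nonneg_right hlow (pow_nonneg hr.le k)
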